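/- arXiv:2302.01431 — 4 statements merged into one kernel-verified Lean document; each statement's English description precedes it below -/
import Mathlib

section
/- For an F-quaternion algebra Q, the trace form T_Q is Witt equivalent to <1,1> ⊥ (-2)·N_Q, where N_Q is the norm form of Q. -/
open Quaternion QuadraticMap LinearMap TensorProduct

variable (F : Type) [Field F]

/-- hyperbolic plane ⟨1,-1⟩ -/
noncomputable def hypPlane : QuadraticForm F (Fin 2 → F) :=
  weightedSumSquares F ![(1 : F), -1]

/-- orthogonal sum of m hyperbolic planes -/
noncomputable def hypForm (m : ℕ) : QuadraticForm F (Fin m → Fin 2 → F) :=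
  QuadraticMap.pi fun _ : Fin m => hypPlane F

/-- A quadratic form is hyperbolic if it is isometric to an orthogonal sum of hyperbolic planes. -/
def IsHyperbolic {M : Type} [AddCommGroup M] [Module F M] (φ : QuadraticForm F M) : Prop :=
  ∃ m : ℕ, φ.Equivalent (hypForm F m)

/-- Witt equivalence: the forms become isometric after adding hyperbolic planes. -/
def WittEquiv {M N : Type} [AddCommGroup M] [Module F M] [AddCommGroup N] [Module F N]
    (φ : QuadraticForm F M) (ψ : QuadraticForm F N) : Prop :=
  ∃ m k : ℕ, (φ.prod (hypForm F m)).Equivalent (ψ.prod (hypForm F k))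

/-- Witt trivial: Witt equivalent to the zero-dimensional form. -/
def WittZero {M : Type} [AddCommGroup M] [Module F M] (φ : QuadraticForm F M) : Prop :=
  ∃ m k : ℕ, (φ.prod (hypForm F m)).Equivalent (hypForm F k)

/-- the r-fold orthogonal sum of a quadratic form -/
noncomputable def sumCopies {M : Type} [AddCommGroup M] [Module F M] (r : ℕ)
    (φ : QuadraticForm F M) : QuadraticForm F (Fin r → M) :=
  QuadraticMap.pi fun _ : Fin r => φ

/-- the m-fold Pfister form ⟪a₁,…,a_m⟫, in its diagonalization with entries
indexed by subsets of {1,…,m} -/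
noncomputable def pfister {m : ℕ} (a : Fin m → F) :
    QuadraticForm F (Finset (Fin m) → F) :=
  weightedSumSquares F fun S : Finset (Fin m) => ∏ i ∈ S, (-a i)

/-- the reduced trace form of a (central simple) algebra `A` over `F`:
`x ↦ Trd_A(x²)`, where `Trd_A = Tr_{A/F}/deg A` and `deg A = √(dim_F A)`. -/
noncomputable def traceForm (A : Type) [Ring A] [Algebra F A] : QuadraticForm F A :=
  ((Nat.sqrt (Module.finrank F A) : F)⁻¹) •
    (LinearMap.BilinMap.toQuadraticMap
      ((LinearMap.mul F A).compr₂ ((LinearMap.trace F A) ∘ₗ (LinearMap.mul F A))))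

/-- the trace form of the quaternion algebra ℍ[F,a,b] : `x ↦ Trd(x²) = 2·re(x²)`. -/
noncomputable def quatTraceForm (a b : F) : QuadraticForm F ℍ[F,a,b] :=
  LinearMap.BilinMap.toQuadraticMap
    ((LinearMap.mul F ℍ[F,a,b]).compr₂ ((2 : F) • (QuaternionAlgebra.reₗ a 0 b : ℍ[F,a,b] →ₗ[F] F)))

/-- the Witt class of φ lies in the m-th power of the fundamental ideal:
φ is Witt equivalent to an orthogonal sum of (±1)-scaled m-fold Pfister forms. -/
def InPowI {M : Type} [AddCommGroup M] [Module F M] (m : ℕ) (φ : QuadraticForm F M) : Prop :=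
  ∃ (k : ℕ) (s : Fin k → Fin m → F) (ε : Fin k → ℤˣ),
    (∀ i j, s i j ≠ 0) ∧
    WittEquiv F φ (QuadraticMap.pi fun i : Fin k => ((ε i : ℤ) : F) • pfister F (s i))

/-- `F` has Brauer 2-torsion index at most 2^n: every finite-dimensional central
division algebra `D` over `F` whose Brauer class is 2-torsion (i.e. `D ⊗ D` is split)
satisfies `deg D ≤ 2^n`, i.e. `dim_F D ≤ 4^n`. -/
def BrauerTwoTorsionIndexLE (n : ℕ) : Prop :=
  ∀ (D : Type) [DivisionRing D] [Algebra F D], Module.Finite F D →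
    Algebra.IsCentral F D →
    (∃ m : ℕ, m ≠ 0 ∧ Nonempty ((D ⊗[F] D) ≃ₐ[F] Matrix (Fin m) (Fin m) F)) →
    Module.finrank F D ≤ 4 ^ n


noncomputable def myEquiv (a b : F) (h2 : (2 : F) ≠ 0) :
    (ℍ[F,a,b] × (Fin 1 → Fin 2 → F)) ≃ₗ[F]
      (((Fin 2 → F) × (Fin 4 → F)) × (Fin 0 → Fin 2 → F)) where
  toFun m := ((![m.1.re + (3 * m.2 0 0 + m.2 0 1)/4, m.1.re - (3 * m.2 0 0 + m.2 0 1)/4],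
               ![(m.2 0 0 + 3 * m.2 0 1)/4, m.1.imI, m.1.imJ, m.1.imK]), 0)
  invFun m := (⟨(m.1.1 0 + m.1.1 1)/2, m.1.2 1, m.1.2 2, m.1.2 3⟩,
               fun _ => ![(3*(m.1.1 0 - m.1.1 1)/2 - m.1.2 0)/2,
                          (3*m.1.2 0 - (m.1.1 0 - m.1.1 1)/2)/2])
  map_add' x y := by
    refine Prod.ext (Prod.ext ?_ ?_) ?_ <;>
      [skip; skip; exact (add_zero (0:Fin 0 → Fin 2 → F)).symm] <;>
      funext i <;> fin_cases i <;>
      simp [Pi.add_apply, QuaternionAlgebra.re_add, QuaternionAlgebra.imI_add,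
        QuaternionAlgebra.imJ_add, QuaternionAlgebra.imK_add] <;> ring
  map_smul' c x := by
    refine Prod.ext (Prod.ext ?_ ?_) ?_ <;>
      [skip; skip; exact (smul_zero c).symm] <;>
      funext i <;> fin_cases i <;>
      simp [Pi.smul_apply, QuaternionAlgebra.re_smul, QuaternionAlgebra.imI_smul,
        QuaternionAlgebra.imJ_smul, QuaternionAlgebra.imK_smul, smul_eq_mul] <;> ring
  left_inv m := by
    have h4 : (4 : F) ≠ 0 := by
      have : (4 : F) = 2 * 2 := by norm_num
      rw [this]; exact mul_ne_zero h2 h2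
    refine Prod.ext (QuaternionAlgebra.ext ?_ ?_ ?_ ?_) ?_
    · show ((m.1.re + (3 * m.2 0 0 + m.2 0 1)/4) + (m.1.re - (3 * m.2 0 0 + m.2 0 1)/4))/2 = m.1.re
      field_simp <;> ring
    · simp
    · simp
    · simp
    · funext i j
      fin_cases i; fin_cases j <;> simp <;> field_simp <;> ring
  right_inv m := by
    have h4 : (4 : F) ≠ 0 := by
      have : (4 : F) = 2 * 2 := by norm_num
      rw [this]; exact mul_ne_zero h2 h2
    refine Prod.ext (Prod.ext ?_ ?_) (funext fun i => i.elim0)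
    · funext j; fin_cases j <;> simp <;> field_simp <;> ring
    · funext j; fin_cases j <;> simp <;> field_simp <;> ring

theorem stmt2 (h2 : (2 : F) ≠ 0) (a b : F) (ha : a ≠ 0) (hb : b ≠ 0) :
    WittEquiv F (quatTraceForm F a b)
      ((weightedSumSquares F ![(1 : F), 1]).prod
        ((-2 : F) • weightedSumSquares F ![(1 : F), -a, -b, a * b])) := by
  have h4 : (4 : F) ≠ 0 := by
    have : (4 : F) = 2 * 2 := by norm_num
    rw [this]; exact mul_ne_zero h2 h2
  refine ⟨1, 0, ⟨{ toLinearEquiv := myEquiv F a b h2, map_app' := ?_ }⟩⟩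
  intro m
  show ((weightedSumSquares F ![(1 : F), 1]).prod
        ((-2 : F) • weightedSumSquares F ![(1 : F), -a, -b, a * b])).prod (hypForm F 0)
      (myEquiv F a b h2 m) = _
  simp only [myEquiv, LinearEquiv.coe_mk, QuadraticMap.prod_apply, hypForm, hypPlane,
    quatTraceForm, QuadraticMap.pi_apply, weightedSumSquares_apply,
    LinearMap.BilinMap.toQuadraticMap_apply, LinearMap.compr₂_apply, LinearMap.mul_apply',
    LinearMap.smul_apply, QuadraticMap.smul_apply, QuaternionAlgebra.re_mul,
    Finset.univ_eq_empty, Finset.sum_empty, Fin.sum_univ_two, Fin.sum_univ_four,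
    Fin.sum_univ_one, Matrix.cons_val_zero, Matrix.cons_val_one, Matrix.head_cons,
    Matrix.cons_val_two, Matrix.tail_cons, Matrix.cons_val_three, smul_eq_mul,
    LinearMap.coe_mk, AddHom.coe_mk, QuaternionAlgebra.reₗ_apply]
  field_simp
  ring
end

section
/- For any two central simple algebras A and B over a field F of characteristic not 2, the trace form of A ⊗_F B is isometric to the tensor product of the trace forms of A and of B: T_{A⊗B} ≅ T_A ⊗ T_B. -/
open Quaternion QuadraticMap LinearMap TensorProduct

variable (F : Type) [Field F]

open TensorProduct

section TensorSimple

variable {F K A : Type*} [Field F] [Field K] [Algebra F K]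
  [Ring A] [Algebra F A]

namespace CSAHelper

variable {ι : Type*} [DecidableEq ι] (e : Module.Basis ι F K)

/-- components of an element of `K ⊗[F] A` w.r.t. a basis of `K` -/
noncomputable def comp : K ⊗[F] A ≃ₗ[F] (ι →₀ A) :=
  (TensorProduct.congr e.repr (LinearEquiv.refl F A)).trans
    (TensorProduct.finsuppScalarLeft F A ι)

lemma comp_tmul (k : K) (a : A) (i : ι) : comp e (k ⊗ₜ[F] a) i = e.repr k i • a := by
  simp [comp, TensorProduct.finsuppScalarLeft_apply_tmul_apply]

lemma comp_symm_single (i : ι) (a : A) : (comp e).symm (Finsupp.single i a) = e i ⊗ₜ[F] a := by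
  rw [LinearEquiv.symm_apply_eq]
  ext j
  rw [comp_tmul, Module.Basis.repr_self]
  simp [Finsupp.single_apply]

lemma comp_conj (u v : A) (y : K ⊗[F] A) (i : ι) :
    comp e (((1:K) ⊗ₜ[F] u) * y * ((1:K) ⊗ₜ[F] v)) i = u * comp e y i * v := by
  induction y using TensorProduct.induction_on with
  | zero => simp
  | tmul k a => rw [Algebra.TensorProduct.tmul_mul_tmul, Algebra.TensorProduct.tmul_mul_tmul]
                simp [comp_tmul, mul_smul_comm, smul_mul_assoc]
  | add y z hy hz =>
      rw [mul_add, add_mul, _root_.map_add, Finsupp.add_apply, hy, hz, _root_.map_add, Finsupp.add_apply,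
        mul_add, add_mul]

theorem isSimpleRing_tensor [Algebra.IsCentral F A] [IsSimpleRing A] :
    IsSimpleRing (K ⊗[F] A) := by
  classical
  obtain ⟨ι, ⟨e⟩⟩ : ∃ ι : Type _, Nonempty (Module.Basis ι F K) := ⟨_, ⟨Module.Basis.ofVectorSpace F K⟩⟩
  haveI : Nonempty ι := e.index_nonempty
  haveI : Nontrivial (K ⊗[F] A) := (comp (A := A) e).toEquiv.nontrivial
  refine IsSimpleRing.of_eq_bot_or_eq_top fun J => ?_
  rcases eq_or_ne J ⊥ with h | hJ
  · exact Or.inl h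
  refine Or.inr ?_
  -- pick a nonzero element of J of minimal support size
  obtain ⟨x₀, hx₀J, hx₀⟩ : ∃ x₀, x₀ ∈ J ∧ x₀ ≠ 0 := by
    obtain ⟨x₀, h1, h2⟩ := SetLike.exists_of_lt (bot_lt_iff_ne_bot.mpr hJ : ⊥ < J)
    exact ⟨x₀, h1, by simpa using h2⟩
  set S : Set ℕ := {n | ∃ x, x ∈ J ∧ x ≠ 0 ∧ (comp e x).support.card = n} with hS
  have hSne : S.Nonempty := ⟨_, x₀, hx₀J, hx₀, rfl⟩
  obtain ⟨x, hxJ, hx, hcard⟩ : ∃ x, x ∈ J ∧ x ≠ 0 ∧ (comp e x).support.card = sInf S :=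
    Nat.sInf_mem hSne
  have hmin : ∀ y, y ∈ J → y ≠ 0 → sInf S ≤ (comp e y).support.card :=
    fun y h1 h2 => Nat.sInf_le ⟨y, h1, h2, rfl⟩
  -- a distinguished index
  have hne : (comp e x).support.Nonempty := by
    rw [Finsupp.support_nonempty_iff]
    simpa using hx
  obtain ⟨i₀, hi₀⟩ := hne
  have ha₀ : comp e x i₀ ≠ 0 := Finsupp.mem_support_iff.mp hi₀
  -- the two-sided ideal generated by that component is everything
  have hspan : (1 : A) ∈ TwoSidedIdeal.span {comp e x i₀} := by
    have : TwoSidedIdeal.span {comp e x i₀} = ⊤ := by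
      rcases IsSimpleRing.simple.eq_bot_or_eq_top (TwoSidedIdeal.span {comp e x i₀}) with h | h
      · exact absurd ((TwoSidedIdeal.mem_bot A).mp
          (h ▸ TwoSidedIdeal.subset_span (by simp : comp e x i₀ ∈ {comp e x i₀}))) ha₀
      · exact h
    rw [this]; exact TwoSidedIdeal.mem_top _
  rw [TwoSidedIdeal.mem_span_iff_mem_addSubgroup_closure] at hspan
  -- produce an element of J with i₀-component 1, support contained in that of x
  have key : ∃ x', x' ∈ J ∧ comp e x' i₀ = 1 ∧ (comp e x').support ⊆ (comp e x).support := by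
    refine AddSubgroup.closure_induction ?_ ⟨0, J.zero_mem, by simp, by simp⟩ ?_ ?_ hspan
    · rintro t ⟨-, ⟨u, -, a', (rfl : a' = _), rfl⟩, v, -, rfl⟩
      refine ⟨((1:K) ⊗ₜ[F] u) * x * ((1:K) ⊗ₜ[F] v), J.mul_mem_right _ _ (J.mul_mem_left _ _ hxJ),
        by rw [comp_conj], fun i hi => ?_⟩
      rw [Finsupp.mem_support_iff] at hi ⊢
      intro h0
      exact hi (by rw [comp_conj, h0, mul_zero, zero_mul])
    · rintro s t - - ⟨y₁, h₁J, h₁, h₁s⟩ ⟨y₂, h₂J, h₂, h₂s⟩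
      refine ⟨y₁ + y₂, J.add_mem h₁J h₂J, by rw [_root_.map_add, Finsupp.add_apply, h₁, h₂], fun i hi => ?_⟩
      rw [_root_.map_add] at hi
      rcases Finset.mem_union.mp (Finsupp.support_add hi) with h | h
      exacts [h₁s h, h₂s h]
    · rintro t - ⟨y, hJy, hy, hys⟩
      exact ⟨-y, J.neg_mem hJy, by rw [_root_.map_neg, Finsupp.neg_apply, hy], by
        intro i hi
        rw [Finsupp.mem_support_iff, _root_.map_neg, Finsupp.neg_apply, neg_ne_zero] at hi
        exact hys (Finsupp.mem_support_iff.mpr hi)⟩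
  obtain ⟨x', hx'J, hx'i₀, hx's⟩ := key
  haveI : Nontrivial A := inferInstance
  have hx' : x' ≠ 0 := fun h => by simp [h] at hx'i₀
  -- all components of x' are central
  have central : ∀ a : A, ∀ i, a * comp e x' i = comp e x' i * a := by
    intro a i
    set y := ((1:K) ⊗ₜ[F] a) * x' - x' * ((1:K) ⊗ₜ[F] a) with hy
    have hyJ : y ∈ J := J.sub_mem (J.mul_mem_left _ _ hx'J) (J.mul_mem_right _ _ hx'J)
    have hcomp : ∀ j, comp e y j = a * comp e x' j - comp e x' j * a := by
      intro j
      have h1 : comp e (((1:K) ⊗ₜ[F] a) * x' * ((1:K) ⊗ₜ[F] (1:A))) j = a * comp e x' j :=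
        by rw [comp_conj, mul_one]
      have h2 : comp e (((1:K) ⊗ₜ[F] (1:A)) * x' * ((1:K) ⊗ₜ[F] a)) j = comp e x' j * a :=
        by rw [comp_conj, one_mul]
      rw [hy, _root_.map_sub, Finsupp.sub_apply, ← h1, ← h2]
      congr 2
      · rw [Algebra.TensorProduct.one_def.symm, mul_one]
      · rw [Algebra.TensorProduct.one_def.symm, one_mul]
    have hy0 : y = 0 := by
      by_contra h0
      have h1 : (comp e y).support ⊆ (comp e x').support \ {i₀} := by
        intro j hj
        rw [Finsupp.mem_support_iff, hcomp] at hj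
        refine Finset.mem_sdiff.mpr ⟨Finsupp.mem_support_iff.mpr fun hz => hj (by simp [hz]),
          fun hj0 => ?_⟩
        rw [Finset.mem_singleton] at hj0
        subst hj0
        exact hj (by simp [hx'i₀])
      have h2 : (comp e y).support.card < sInf S := by
        calc (comp e y).support.card ≤ ((comp e x').support \ {i₀}).card := Finset.card_le_card h1
        _ < (comp e x').support.card := Finset.card_lt_card <| Finset.sdiff_ssubset
              (Finset.singleton_subset_iff.mpr (Finsupp.mem_support_iff.mpr (by simp [hx'i₀])))
              (by simp)
        _ ≤ (comp e x).support.card := Finset.card_le_card hx's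
        _ = sInf S := hcard
      exact absurd (hmin y hyJ h0) (not_le.mpr h2)
    have := hcomp i
    rw [hy0, _root_.map_zero, Finsupp.zero_apply] at this
    exact sub_eq_zero.mp this.symm
  -- hence x' = kk ⊗ 1 for some nonzero kk
  have hscal : ∀ i, ∃ c : F, comp e x' i = algebraMap F A c := by
    intro i
    have : comp e x' i ∈ Subalgebra.center F A := Subalgebra.mem_center_iff.mpr fun b => central b i
    have := Algebra.IsCentral.out (K := F) (D := A) this
    rw [Algebra.mem_bot, Set.mem_range] at this
    obtain ⟨c, hc⟩ := this
    exact ⟨c, hc.symm⟩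
  choose μ hμ using hscal
  set kk : K := ∑ i ∈ (comp e x').support, μ i • e i with hkk
  have hx'kk : x' = kk ⊗ₜ[F] (1 : A) := by
    conv_lhs => rw [← (comp e).symm_apply_apply x', ← Finsupp.sum_single (comp e x')]
    rw [Finsupp.sum, _root_.map_sum, hkk, TensorProduct.sum_tmul]
    refine Finset.sum_congr rfl fun i hi => ?_
    rw [comp_symm_single, hμ i, Algebra.algebraMap_eq_smul_one, TensorProduct.tmul_smul,
      TensorProduct.smul_tmul']
  have hkk0 : kk ≠ 0 := by
    intro h
    rw [h, TensorProduct.zero_tmul] at hx'kk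
    exact hx' hx'kk
  have hone : (1 : K ⊗[F] A) ∈ J := by
    have : (kk⁻¹ ⊗ₜ[F] (1:A)) * x' ∈ J := J.mul_mem_left _ _ hx'J
    rwa [hx'kk, Algebra.TensorProduct.tmul_mul_tmul, inv_mul_cancel₀ hkk0, mul_one,
      ← Algebra.TensorProduct.one_def] at this
  exact J.eq_top hone

end CSAHelper

end TensorSimple

section Square

open CSAHelper

-- Every finite-dimensional module endomorphism over an algebraically closed field,
-- commuting with a simple module structure, is a scalar. (Schur + eigenvalue)
theorem simple_finrank_isSquare (K B : Type*) [Field K] [IsAlgClosed K] [Ring B] [Algebra K B]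
    [IsSimpleRing B] [Module.Finite K B] :
    IsSquare (Module.finrank K B) := by
  classical
  have hrank : Module.finrank K B = Module.finrank K B := rfl
  -- find a minimal left ideal
  haveI : IsArtinian K B := inferInstance
  haveI : IsArtinian B B := isArtinian_of_tower K inferInstance
  have : IsAtomic (Submodule B B) := isAtomic_of_orderBot_wellFounded_lt IsWellFounded.wf
  obtain ⟨I, hI⟩ : ∃ I : Submodule B B, IsAtom I := by
    rcases IsAtomic.eq_bot_or_exists_atom_le (⊤ : Submodule B B) with h | ⟨a, ha, -⟩
    · exact absurd h (by simp)
    · exact ⟨a, ha⟩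
  haveI hsimple : IsSimpleModule B I := isSimpleModule_iff_isAtom.mpr hI
  haveI : Nontrivial I := Submodule.nontrivial_iff_ne_bot.mpr hI.1
  haveI : Module.Finite K I := Module.Finite.equiv (LinearEquiv.refl K (I.restrictScalars K) :
    (I.restrictScalars K) ≃ₗ[K] I)
  -- every B-endomorphism of I is multiplication by a scalar in K
  have scalar : ∀ φ : Module.End B I, ∃ c : K, ∀ x : I, φ x = c • x := by
    intro φ
    let φK : Module.End K I := φ.restrictScalars K
    obtain ⟨c, hc⟩ := Module.End.exists_eigenvalue φK
    obtain ⟨v, hv⟩ := hc.exists_hasEigenvector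
    let m : Module.End B I :=
      { toFun := fun x => c • x
        map_add' := fun x y => smul_add _ _ _
        map_smul' := fun b x => Subtype.ext (smul_comm c b (x : B)) }
    have hψ : (φ - m) v = 0 := by
      have : φ v = c • v := hv.apply_eq_smul
      simp [m, this]
    rcases LinearMap.injective_or_eq_zero (φ - m) with hinj | h0
    · exact absurd (hinj (by simpa using hψ)) hv.right
    · refine ⟨c, fun x => ?_⟩
      have := LinearMap.congr_fun h0 x
      simpa [m, sub_eq_zero] using this
  -- the left regular representation on I
  let lam : B →ₐ[K] Module.End K I := Algebra.lsmul K K I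
  have hinj : Function.Injective lam := lam.toRingHom.injective
  have hmem : ∀ (t : B) (y : I), t * (y : B) ∈ I := fun t y => I.smul_mem t y.2
  have keyf : ∀ (f : Module.End K I) (a z : I),
      (f ⟨(a : B) * (z : B), hmem _ z⟩ : B) = (f a : B) * (z : B) := by
    intro f a z
    let rz : Module.End B I :=
      { toFun := fun x => ⟨(x : B) * (z : B), hmem _ z⟩
        map_add' := fun x y => Subtype.ext (add_mul _ _ _)
        map_smul' := fun b x => Subtype.ext (mul_assoc b _ _) }
    obtain ⟨c, hc⟩ := scalar rz
    have h1 : (⟨(a : B) * (z : B), hmem _ z⟩ : I) = c • a := by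
      have := hc a; rwa [show rz a = ⟨(a : B) * (z : B), hmem _ z⟩ from rfl] at this
    have h2 : (⟨(f a : B) * (z : B), hmem _ z⟩ : I) = c • (f a) := by
      have := hc (f a); rwa [show rz (f a) = ⟨(f a : B) * (z : B), hmem _ z⟩ from rfl] at this
    calc (f ⟨(a : B) * (z : B), hmem _ z⟩ : B) = (f (c • a) : B) := by rw [h1]
    _ = ((c • f a : I) : B) := by rw [_root_.map_smul]
    _ = ((⟨(f a : B) * (z : B), hmem _ z⟩ : I) : B) := by rw [h2]
    _ = (f a : B) * (z : B) := rfl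
  have hsurj : Function.Surjective lam := by
    intro f
    obtain ⟨x₀, hx₀⟩ := exists_ne (0 : I)
    have hx₀B : (x₀ : B) ≠ 0 := fun h => hx₀ (Subtype.ext h)
    have hspan : (1 : B) ∈ TwoSidedIdeal.span {(x₀ : B)} := by
      rcases IsSimpleRing.simple.eq_bot_or_eq_top (TwoSidedIdeal.span {(x₀ : B)}) with h | h
      · exact absurd ((TwoSidedIdeal.mem_bot B).mp
          (h ▸ TwoSidedIdeal.subset_span (by simp : (x₀:B) ∈ {(x₀:B)}))) hx₀B
      · rw [h]; exact TwoSidedIdeal.mem_top _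
    rw [TwoSidedIdeal.mem_span_iff_mem_addSubgroup_closure] at hspan
    have key : ∃ b : B, ∀ y : I, (f ⟨(1:B) * (y : B), hmem 1 y⟩ : B) = b * (y : B) := by
      refine AddSubgroup.closure_induction
        (p := fun t _ => ∃ b : B, ∀ y : I, (f ⟨t * (y : B), hmem t y⟩ : B) = b * (y : B))
        ?_ ⟨0, fun y => by
          have : (⟨(0:B) * (y : B), hmem 0 y⟩ : I) = 0 := Subtype.ext (zero_mul _)
          rw [this, _root_.map_zero, zero_mul]; rfl⟩ ?_ ?_ hspan
      · rintro t ⟨-, ⟨u, -, a', (rfl : a' = _), rfl⟩, v, -, rfl⟩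
        refine ⟨(f ⟨u * (x₀ : B), hmem u x₀⟩ : B) * v, fun y => ?_⟩
        have harg : (⟨u * (x₀:B) * v * (y : B), hmem _ y⟩ : I)
            = ⟨((⟨u * (x₀:B), hmem u x₀⟩ : I) : B) * ((⟨v * (y:B), hmem v y⟩ : I) : B), hmem _ _⟩ :=
          Subtype.ext (by simp [mul_assoc])
        rw [harg, keyf]
        simp [mul_assoc]
      · rintro s t - - ⟨b₁, h₁⟩ ⟨b₂, h₂⟩
        refine ⟨b₁ + b₂, fun y => ?_⟩
        have harg : (⟨(s + t) * (y : B), hmem _ y⟩ : I)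
            = ⟨s * (y:B), hmem s y⟩ + ⟨t * (y:B), hmem t y⟩ := Subtype.ext (add_mul _ _ _)
        rw [harg, _root_.map_add]
        show (((f ⟨s * (y:B), hmem s y⟩ : I) : B) + ((f ⟨t * (y:B), hmem t y⟩ : I) : B)) = _
        rw [h₁, h₂, add_mul]
      · rintro t - ⟨b, hb⟩
        refine ⟨-b, fun y => ?_⟩
        have harg : (⟨(-t) * (y : B), hmem _ y⟩ : I) = -⟨t * (y:B), hmem t y⟩ :=
          Subtype.ext (neg_mul _ _)
        rw [harg, _root_.map_neg]
        show -((f ⟨t * (y:B), hmem t y⟩ : I) : B) = _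
        rw [hb, neg_mul]
    obtain ⟨b, hb⟩ := key
    refine ⟨b, ?_⟩
    ext y
    show b * (y : B) = (f y : B)
    have harg : (⟨(1:B) * (y : B), hmem 1 y⟩ : I) = y := Subtype.ext (one_mul _)
    rw [← hb y, harg]
  let eqv : B ≃ₗ[K] Module.End K I := LinearEquiv.ofBijective lam.toLinearMap ⟨hinj, hsurj⟩
  refine ⟨Module.finrank K I, ?_⟩
  rw [← hrank, eqv.finrank_eq, Module.finrank_linearMap]

theorem csa_finrank_isSquare (F A : Type*) [Field F] [Ring A] [Algebra F A]
    [Algebra.IsCentral F A] [IsSimpleRing A] [Module.Finite F A] :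
    IsSquare (Module.finrank F A) := by
  haveI : IsSimpleRing (AlgebraicClosure F ⊗[F] A) := isSimpleRing_tensor
  haveI : Module.Finite (AlgebraicClosure F) (AlgebraicClosure F ⊗[F] A) :=
    Module.Finite.base_change _ _ _
  have h := simple_finrank_isSquare (AlgebraicClosure F) (AlgebraicClosure F ⊗[F] A)
  rwa [Module.finrank_tensorProduct, Module.finrank_self, one_mul] at h

end Square

section TraceHelper

variable (F : Type) [Field F]

/-- the unnormalized trace bilinear form of an algebra -/
noncomputable def tbil (C : Type) [Ring C] [Algebra F C] : LinearMap.BilinForm F C :=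
  (LinearMap.mul F C).compr₂ ((LinearMap.trace F C) ∘ₗ (LinearMap.mul F C))

lemma tbil_apply (C : Type) [Ring C] [Algebra F C] (x y : C) :
    tbil F C x y = LinearMap.trace F C (LinearMap.mul F C (x * y)) := rfl

lemma mul_eq_mulLeft (C : Type) [Ring C] [Algebra F C] (x : C) :
    LinearMap.mul F C x = LinearMap.mulLeft F x := by
  ext y; simp [LinearMap.mul_apply']

lemma tbil_isSymm (C : Type) [Ring C] [Algebra F C] : (tbil F C).IsSymm := by
  rw [LinearMap.BilinForm.isSymm_def]
  intro x y
  rw [tbil_apply, tbil_apply, mul_eq_mulLeft, mul_eq_mulLeft,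
    LinearMap.mulLeft_mul, LinearMap.mulLeft_mul]
  exact LinearMap.trace_mul_comm F (LinearMap.mulLeft F x) (LinearMap.mulLeft F y)

lemma mul_tensor (A B : Type) [Ring A] [Algebra F A] [Ring B] [Algebra F B]
    (u : A) (v : B) :
    LinearMap.mul F (A ⊗[F] B) (u ⊗ₜ[F] v)
      = TensorProduct.map (LinearMap.mul F A u) (LinearMap.mul F B v) :=
  TensorProduct.ext' fun x y => by
    simp [LinearMap.mul_apply', Algebra.TensorProduct.tmul_mul_tmul]

lemma tbil_tensor (A B : Type) [Ring A] [Algebra F A] [Module.Finite F A]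
    [Ring B] [Algebra F B] [Module.Finite F B] :
    tbil F (A ⊗[F] B) = LinearMap.BilinForm.tmul (tbil F A) (tbil F B) := by
  refine TensorProduct.ext' fun a b => TensorProduct.ext' fun a' b' => ?_
  rw [LinearMap.BilinForm.tensorDistrib_tmul]
  rw [tbil_apply, Algebra.TensorProduct.tmul_mul_tmul, mul_tensor,
    LinearMap.trace_tensorProduct']
  rw [tbil_apply, tbil_apply, smul_eq_mul, mul_comm]

lemma sqrt_finrank_tensor (A B : Type)
    [Ring A] [Algebra F A] [Algebra.IsCentral F A] [IsSimpleRing A] [Module.Finite F A]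
    [Ring B] [Algebra F B] [Algebra.IsCentral F B] [IsSimpleRing B] [Module.Finite F B] :
    (Nat.sqrt (Module.finrank F (A ⊗[F] B)) : F)
      = (Nat.sqrt (Module.finrank F A) : F) * (Nat.sqrt (Module.finrank F B) : F) := by
  obtain ⟨r, hr⟩ := csa_finrank_isSquare F A
  obtain ⟨s, hs⟩ := csa_finrank_isSquare F B
  rw [Module.finrank_tensorProduct, hr, hs,
    show r * r * (s * s) = (r * s) * (r * s) by ring, Nat.sqrt_eq, Nat.sqrt_eq, Nat.sqrt_eq]
  push_cast
  ring

end TraceHelper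

theorem stmt3 [Invertible (2 : F)] (A B : Type)
    [Ring A] [Algebra F A] [Algebra.IsCentral F A] [IsSimpleRing A] [Module.Finite F A]
    [Ring B] [Algebra F B] [Algebra.IsCentral F B] [IsSimpleRing B] [Module.Finite F B] :
    (traceForm F (A ⊗[F] B)).Equivalent ((traceForm F A).tmul (traceForm F B)) := by
  have hdef : ∀ (C : Type) [Ring C] [Algebra F C], traceForm F C
      = ((Nat.sqrt (Module.finrank F C) : F))⁻¹ • (tbil F C).toQuadraticMap :=
    fun C _ _ => rfl
  have h : traceForm F (A ⊗[F] B) = (traceForm F A).tmul (traceForm F B) := by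
    have h1 : QuadraticMap.associatedHom F (traceForm F (A ⊗[F] B))
        = QuadraticMap.associatedHom F ((traceForm F A).tmul (traceForm F B)) := by
      have hrhs : QuadraticMap.associatedHom F ((traceForm F A).tmul (traceForm F B))
          = LinearMap.BilinForm.tmul (QuadraticMap.associatedHom F (traceForm F A))
              (QuadraticMap.associatedHom F (traceForm F B)) :=
        QuadraticForm.associated_tmul (traceForm F A) (traceForm F B)
      have hsm : ∀ (M : Type) [AddCommGroup M] [Module F M] (c : F) (Q : QuadraticForm F M),
          QuadraticMap.associatedHom F (c • Q) = c • QuadraticMap.associatedHom F Q :=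
        fun M _ _ c Q => _root_.map_smul (QuadraticMap.associatedHom F) c Q
      rw [hrhs, hdef, hdef, hdef, hsm, hsm, hsm,
        QuadraticMap.associated_left_inverse F (LinearMap.BilinForm.isSymm_def.mp (tbil_isSymm F (A ⊗[F] B))),
        QuadraticMap.associated_left_inverse F (LinearMap.BilinForm.isSymm_def.mp (tbil_isSymm F A)),
        QuadraticMap.associated_left_inverse F (LinearMap.BilinForm.isSymm_def.mp (tbil_isSymm F B))]
      rw [show LinearMap.BilinForm.tmul ((Nat.sqrt (Module.finrank F A) : F)⁻¹ • tbil F A)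
            ((Nat.sqrt (Module.finrank F B) : F)⁻¹ • tbil F B)
          = ((Nat.sqrt (Module.finrank F A) : F)⁻¹ * (Nat.sqrt (Module.finrank F B) : F)⁻¹) •
            LinearMap.BilinForm.tmul (tbil F A) (tbil F B) by
        rw [LinearMap.BilinForm.tmul, ← TensorProduct.smul_tmul', TensorProduct.tmul_smul,
          _root_.map_smul, _root_.map_smul, smul_smul]]
      rw [tbil_tensor, sqrt_finrank_tensor, mul_inv]
    have h2 := QuadraticMap.toQuadraticMap_associated F (traceForm F (A ⊗[F] B))
    have h3 := QuadraticMap.toQuadraticMap_associated F ((traceForm F A).tmul (traceForm F B))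
    rw [← h2, ← h3, h1]
  rw [h]
  exact QuadraticMap.Equivalent.refl _
end

section
/- Let F be a field of characteristic not 2 and a ∈ F* a sum of two squares in F. Then for any b ∈ F*, the quadratic form 2 × <<a,b>> (two copies of the 2-fold Pfister form <1,-a,-b,ab>) is hyperbolic, and <<a,b>> ≅ -1 · <<a,b>>. -/
open Quaternion QuadraticMap LinearMap TensorProduct

set_option maxHeartbeats 1000000

variable (F : Type) [Field F]

/-! ### Auxiliary material for `stmt15` -/

section Stmt15Aux

theorem vec2_app0 {α : Type*} (a0 a1 : α) : ![a0,a1] 0 = a0 := rfl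
theorem vec2_app1 {α : Type*} (a0 a1 : α) : ![a0,a1] 1 = a1 := rfl
theorem vec4_app0 {α : Type*} (a0 a1 a2 a3 : α) : ![a0,a1,a2,a3] 0 = a0 := rfl
theorem vec4_app1 {α : Type*} (a0 a1 a2 a3 : α) : ![a0,a1,a2,a3] 1 = a1 := rfl
theorem vec4_app2 {α : Type*} (a0 a1 a2 a3 : α) : ![a0,a1,a2,a3] 2 = a2 := rfl
theorem vec4_app3 {α : Type*} (a0 a1 a2 a3 : α) : ![a0,a1,a2,a3] 3 = a3 := rfl
theorem vec8_app0 {α : Type*} (a0 a1 a2 a3 a4 a5 a6 a7 : α) : ![a0,a1,a2,a3,a4,a5,a6,a7] 0 = a0 := rfl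
theorem vec8_app1 {α : Type*} (a0 a1 a2 a3 a4 a5 a6 a7 : α) : ![a0,a1,a2,a3,a4,a5,a6,a7] 1 = a1 := rfl
theorem vec8_app2 {α : Type*} (a0 a1 a2 a3 a4 a5 a6 a7 : α) : ![a0,a1,a2,a3,a4,a5,a6,a7] 2 = a2 := rfl
theorem vec8_app3 {α : Type*} (a0 a1 a2 a3 a4 a5 a6 a7 : α) : ![a0,a1,a2,a3,a4,a5,a6,a7] 3 = a3 := rfl
theorem vec8_app4 {α : Type*} (a0 a1 a2 a3 a4 a5 a6 a7 : α) : ![a0,a1,a2,a3,a4,a5,a6,a7] 4 = a4 := rfl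
theorem vec8_app5 {α : Type*} (a0 a1 a2 a3 a4 a5 a6 a7 : α) : ![a0,a1,a2,a3,a4,a5,a6,a7] 5 = a5 := rfl
theorem vec8_app6 {α : Type*} (a0 a1 a2 a3 a4 a5 a6 a7 : α) : ![a0,a1,a2,a3,a4,a5,a6,a7] 6 = a6 := rfl
theorem vec8_app7 {α : Type*} (a0 a1 a2 a3 a4 a5 a6 a7 : α) : ![a0,a1,a2,a3,a4,a5,a6,a7] 7 = a7 := rfl

theorem vec8_eq {α : Type*} {a0 a1 a2 a3 a4 a5 a6 a7 b0 b1 b2 b3 b4 b5 b6 b7 : α}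
    (h0 : a0 = b0) (h1 : a1 = b1) (h2 : a2 = b2) (h3 : a3 = b3)
    (h4 : a4 = b4) (h5 : a5 = b5) (h6 : a6 = b6) (h7 : a7 = b7) :
    ![a0,a1,a2,a3,a4,a5,a6,a7] = ![b0,b1,b2,b3,b4,b5,b6,b7] := by
  rw [h0, h1, h2, h3, h4, h5, h6, h7]

theorem vec4_eq {α : Type*} {a0 a1 a2 a3 b0 b1 b2 b3 : α}
    (h0 : a0 = b0) (h1 : a1 = b1) (h2 : a2 = b2) (h3 : a3 = b3) :
    ![a0,a1,a2,a3] = ![b0,b1,b2,b3] := by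
  rw [h0, h1, h2, h3]

theorem vec8_eta {α : Type*} (v : Fin 8 → α) : ![v 0,v 1,v 2,v 3,v 4,v 5,v 6,v 7] = v := by
  funext i; fin_cases i <;> rfl

theorem vec4_eta {α : Type*} (v : Fin 4 → α) : ![v 0,v 1,v 2,v 3] = v := by
  funext i; fin_cases i <;> rfl

theorem vec2_eta {α : Type*} (v : Fin 2 → α) : ![v 0,v 1] = v := by
  funext i; fin_cases i <;> rfl

theorem vec8_ext {α : Type*} {v : Fin 8 → α} {a0 a1 a2 a3 a4 a5 a6 a7 : α}
    (h0 : a0 = v 0) (h1 : a1 = v 1) (h2 : a2 = v 2) (h3 : a3 = v 3)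
    (h4 : a4 = v 4) (h5 : a5 = v 5) (h6 : a6 = v 6) (h7 : a7 = v 7) :
    ![a0,a1,a2,a3,a4,a5,a6,a7] = v := by
  rw [h0, h1, h2, h3, h4, h5, h6, h7, vec8_eta]

theorem vec4_ext {α : Type*} {v : Fin 4 → α} {a0 a1 a2 a3 : α}
    (h0 : a0 = v 0) (h1 : a1 = v 1) (h2 : a2 = v 2) (h3 : a3 = v 3) :
    ![a0,a1,a2,a3] = v := by
  rw [h0, h1, h2, h3, vec4_eta]

theorem vec2_ext {α : Type*} {v : Fin 2 → α} {a0 a1 : α}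
    (h0 : a0 = v 0) (h1 : a1 = v 1) : ![a0,a1] = v := by
  rw [h0, h1, vec2_eta]

/-- the explicit identification of `Fin 4` with the subsets of `Fin 2` -/
def e4Aux : Fin 4 ≃ Finset (Fin 2) where
  toFun := ![∅, {0}, {1}, {0,1}]
  invFun S := if S = ∅ then 0 else if S = {0} then 1 else if S = {1} then 2 else 3
  left_inv := by decide
  right_inv := by decide

theorem sum_subsets_fin2 (f : Finset (Fin 2) → F) :
    ∑ S, f S = f ∅ + f {0} + f {1} + f {0,1} := by
  rw [show (Finset.univ : Finset (Finset (Fin 2))) = {∅, {0}, {1}, {0,1}} by decide]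
  rw [Finset.sum_insert (by decide), Finset.sum_insert (by decide),
    Finset.sum_insert (by decide), Finset.sum_singleton]
  ring

/-- diagonalize the 2-fold Pfister form over `Fin 4` -/
noncomputable def pfisterEquivAux (a b : F) :
    (pfister F ![a, b]).IsometryEquiv (weightedSumSquares F ![(1:F), -a, -b, a*b]) where
  toLinearEquiv := LinearEquiv.funCongrLeft F F e4Aux
  map_app' m := by
    simp only [pfister, weightedSumSquares_apply, LinearEquiv.funCongrLeft_apply,
      LinearEquiv.toFun_eq_coe]
    rw [sum_subsets_fin2, Fin.sum_univ_four]
    simp [e4Aux, Finset.prod_pair (by decide : (0:Fin 2) ≠ 1), smul_eq_mul,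
      Function.comp]

/-- scaling an isometry equivalence -/
def isoSmulCongrAux {M N : Type} [AddCommGroup M] [Module F M] [AddCommGroup N] [Module F N]
    {Q₁ : QuadraticForm F M} {Q₂ : QuadraticForm F N} (c : F)
    (e : Q₁.IsometryEquiv Q₂) : (c • Q₁).IsometryEquiv (c • Q₂) where
  toLinearEquiv := e.toLinearEquiv
  map_app' m := by
    have h := e.map_app' m
    simp only [QuadraticMap.smul_apply, LinearEquiv.toFun_eq_coe] at *
    rw [h]

/-- the binary isometry `⟨1,-a⟩ ≃ ⟨-1,a⟩` (applied twice), given a solution of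
`p² - a r² = -1` -/
noncomputable def lequiv4Aux (a p r : F) (hp : p^2 - a*r^2 = -1) :
    (Fin 4 → F) ≃ₗ[F] (Fin 4 → F) where
  toFun v := ![p*v 0 + a*r*v 1, r*v 0 + p*v 1, p*v 2 + a*r*v 3, r*v 2 + p*v 3]
  invFun w := ![-(p*w 0) + a*r*w 1, r*w 0 - p*w 1, -(p*w 2) + a*r*w 3, r*w 2 - p*w 3]
  map_add' u v := by
    show _ = _ + _
    simp only [Pi.add_apply, Matrix.cons_add_cons, Matrix.empty_add_empty]
    exact vec4_eq (by ring) (by ring) (by ring) (by ring)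
  map_smul' c v := by
    show _ = c • _
    simp only [Pi.smul_apply, Matrix.smul_cons, Matrix.smul_empty, smul_eq_mul]
    exact vec4_eq (by ring) (by ring) (by ring) (by ring)
  left_inv v := by
    refine vec4_ext ?_ ?_ ?_ ?_ <;>
      simp only [vec4_app0, vec4_app1, vec4_app2, vec4_app3] <;>
      [linear_combination (-(v 0))*hp; linear_combination (-(v 1))*hp;
       linear_combination (-(v 2))*hp; linear_combination (-(v 3))*hp]
  right_inv w := by
    refine vec4_ext ?_ ?_ ?_ ?_ <;>
      simp only [vec4_app0, vec4_app1, vec4_app2, vec4_app3] <;>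
      [linear_combination (-(w 0))*hp; linear_combination (-(w 1))*hp;
       linear_combination (-(w 2))*hp; linear_combination (-(w 3))*hp]

/-- `⟨1,-a,-b,ab⟩ ≃ -⟨1,-a,-b,ab⟩` given a solution of `p² - a r² = -1` -/
noncomputable def isoEq4Aux (a b p r : F) (hp : p^2 - a*r^2 = -1) :
    (weightedSumSquares F ![(1:F), -a, -b, a*b]).IsometryEquiv
      ((-1 : F) • weightedSumSquares F ![(1:F), -a, -b, a*b]) where
  toLinearEquiv := lequiv4Aux F a p r hp
  map_app' v := by
    simp only [QuadraticMap.smul_apply, weightedSumSquares_apply, Fin.sum_univ_four,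
      lequiv4Aux, LinearEquiv.coe_mk, LinearEquiv.toFun_eq_coe, smul_eq_mul,
      vec4_app0, vec4_app1, vec4_app2, vec4_app3]
    linear_combination (-(v 0^2 - a*v 1^2 - b*v 2^2 + a*b*v 3^2))*hp

/-- flattening two copies of a diagonal quaternary form -/
noncomputable def flat24Aux (w0 w1 w2 w3 : F) :
    (QuadraticMap.pi fun _ : Fin 2 => weightedSumSquares F ![w0,w1,w2,w3]).IsometryEquiv
      (weightedSumSquares F ![w0,w1,w2,w3,w0,w1,w2,w3]) where
  toLinearEquiv :=
  { toFun := fun v => ![v 0 0, v 0 1, v 0 2, v 0 3, v 1 0, v 1 1, v 1 2, v 1 3]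
    invFun := fun w => ![![w 0, w 1, w 2, w 3], ![w 4, w 5, w 6, w 7]]
    map_add' := fun u v => by
      show _ = _ + _
      simp only [Pi.add_apply, Matrix.cons_add_cons, Matrix.empty_add_empty]
    map_smul' := fun c v => by
      show _ = c • _
      simp only [Pi.smul_apply, Matrix.smul_cons, Matrix.smul_empty, smul_eq_mul]
    left_inv := fun v => by
      refine vec2_ext (vec4_ext ?_ ?_ ?_ ?_) (vec4_ext ?_ ?_ ?_ ?_) <;>
        simp only [vec8_app0, vec8_app1, vec8_app2, vec8_app3, vec8_app4, vec8_app5,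
          vec8_app6, vec8_app7]
    right_inv := fun w => by
      refine vec8_ext ?_ ?_ ?_ ?_ ?_ ?_ ?_ ?_ <;>
        simp only [vec2_app0, vec2_app1, vec4_app0, vec4_app1, vec4_app2, vec4_app3] }
  map_app' v := by
    simp only [LinearEquiv.coe_mk, LinearEquiv.toFun_eq_coe, QuadraticMap.pi_apply,
      weightedSumSquares_apply, Fin.sum_univ_two, Fin.sum_univ_four, Fin.sum_univ_eight,
      smul_eq_mul, vec4_app0, vec4_app1, vec4_app2, vec4_app3,
      vec8_app0, vec8_app1, vec8_app2, vec8_app3, vec8_app4, vec8_app5, vec8_app6, vec8_app7]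
    ring

/-- the rotation step: uses `a = x² + y²` -/
noncomputable def coreRAux (a x y b : F) (ha : a ≠ 0) (hsum : a = x^2 + y^2) :
    (weightedSumSquares F ![(1:F),-a,-b,a*b,1,-a,-b,a*b]).IsometryEquiv
      (weightedSumSquares F ![(1:F),-1,1,-1,b,-b,b,-b]) where
  toLinearEquiv :=
  { toFun := fun v => ![v 0, x*v 1 - y*v 5, v 4, y*v 1 + x*v 5,
        x*v 3 - y*v 7, v 2, y*v 3 + x*v 7, v 6]
    invFun := fun w => ![w 0, (x*w 1 + y*w 3)/a, w 5, (x*w 4 + y*w 6)/a,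
        w 2, (x*w 3 - y*w 1)/a, w 7, (x*w 6 - y*w 4)/a]
    map_add' := fun u v => by
      show _ = _ + _
      simp only [Pi.add_apply, Matrix.cons_add_cons, Matrix.empty_add_empty]
      exact vec8_eq (by ring) (by ring) (by ring) (by ring) (by ring) (by ring) (by ring)
        (by ring)
    map_smul' := fun c v => by
      show _ = c • _
      simp only [Pi.smul_apply, Matrix.smul_cons, Matrix.smul_empty, smul_eq_mul]
      exact vec8_eq (by ring) (by ring) (by ring) (by ring) (by ring) (by ring) (by ring)
        (by ring)
    left_inv := fun v => by
      subst hsum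
      refine vec8_ext ?_ ?_ ?_ ?_ ?_ ?_ ?_ ?_ <;>
        simp only [vec8_app0, vec8_app1, vec8_app2, vec8_app3, vec8_app4, vec8_app5,
          vec8_app6, vec8_app7] <;> field_simp <;> ring
    right_inv := fun w => by
      subst hsum
      refine vec8_ext ?_ ?_ ?_ ?_ ?_ ?_ ?_ ?_ <;>
        simp only [vec8_app0, vec8_app1, vec8_app2, vec8_app3, vec8_app4, vec8_app5,
          vec8_app6, vec8_app7] <;> field_simp <;> ring }
  map_app' v := by
    subst hsum
    simp only [LinearEquiv.coe_mk, LinearEquiv.toFun_eq_coe, weightedSumSquares_apply,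
      Fin.sum_univ_eight, smul_eq_mul, vec8_app0, vec8_app1, vec8_app2, vec8_app3,
      vec8_app4, vec8_app5, vec8_app6, vec8_app7]
    ring

/-- the rescaling step: `⟨b,-b⟩ ≃ ⟨1,-1⟩` twice -/
noncomputable def coreBAux (b : F) (h2 : (2:F) ≠ 0) (hb : b ≠ 0) :
    (weightedSumSquares F ![(1:F),-1,1,-1,b,-b,b,-b]).IsometryEquiv
      (weightedSumSquares F ![(1:F),-1,1,-1,1,-1,1,-1]) where
  toLinearEquiv :=
  { toFun := fun v => ![v 0, v 1, v 2, v 3,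
        ((b+1)*v 4 + (b-1)*v 5)/2, ((b-1)*v 4 + (b+1)*v 5)/2,
        ((b+1)*v 6 + (b-1)*v 7)/2, ((b-1)*v 6 + (b+1)*v 7)/2]
    invFun := fun w => ![w 0, w 1, w 2, w 3,
        ((w 4 - w 5) + (w 4 + w 5)/b)/2, ((w 4 + w 5)/b - (w 4 - w 5))/2,
        ((w 6 - w 7) + (w 6 + w 7)/b)/2, ((w 6 + w 7)/b - (w 6 - w 7))/2]
    map_add' := fun u v => by
      show _ = _ + _
      simp only [Pi.add_apply, Matrix.cons_add_cons, Matrix.empty_add_empty]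
      exact vec8_eq (by ring) (by ring) (by ring) (by ring) (by ring) (by ring) (by ring)
        (by ring)
    map_smul' := fun c v => by
      show _ = c • _
      simp only [Pi.smul_apply, Matrix.smul_cons, Matrix.smul_empty, smul_eq_mul]
      exact vec8_eq (by ring) (by ring) (by ring) (by ring) (by ring) (by ring) (by ring)
        (by ring)
    left_inv := fun v => by
      refine vec8_ext ?_ ?_ ?_ ?_ ?_ ?_ ?_ ?_ <;>
        simp only [vec8_app0, vec8_app1, vec8_app2, vec8_app3, vec8_app4, vec8_app5,
          vec8_app6, vec8_app7] <;> field_simp <;> ring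
    right_inv := fun w => by
      refine vec8_ext ?_ ?_ ?_ ?_ ?_ ?_ ?_ ?_ <;>
        simp only [vec8_app0, vec8_app1, vec8_app2, vec8_app3, vec8_app4, vec8_app5,
          vec8_app6, vec8_app7] <;> field_simp <;> ring }
  map_app' v := by
    simp only [LinearEquiv.coe_mk, LinearEquiv.toFun_eq_coe, weightedSumSquares_apply,
      Fin.sum_univ_eight, smul_eq_mul, vec8_app0, vec8_app1, vec8_app2, vec8_app3,
      vec8_app4, vec8_app5, vec8_app6, vec8_app7]
    field_simp
    ring

/-- flattening `hypForm F 4` -/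
noncomputable def flat42Aux :
    (hypForm F 4).IsometryEquiv (weightedSumSquares F ![(1:F),-1,1,-1,1,-1,1,-1]) where
  toLinearEquiv :=
  { toFun := fun v => ![v 0 0, v 0 1, v 1 0, v 1 1, v 2 0, v 2 1, v 3 0, v 3 1]
    invFun := fun w => ![![w 0, w 1], ![w 2, w 3], ![w 4, w 5], ![w 6, w 7]]
    map_add' := fun u v => by
      show _ = _ + _
      simp only [Pi.add_apply, Matrix.cons_add_cons, Matrix.empty_add_empty]
    map_smul' := fun c v => by
      show _ = c • _
      simp only [Pi.smul_apply, Matrix.smul_cons, Matrix.smul_empty, smul_eq_mul]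
    left_inv := fun v => by
      refine vec4_ext (vec2_ext ?_ ?_) (vec2_ext ?_ ?_) (vec2_ext ?_ ?_) (vec2_ext ?_ ?_) <;>
        simp only [vec8_app0, vec8_app1, vec8_app2, vec8_app3, vec8_app4, vec8_app5,
          vec8_app6, vec8_app7]
    right_inv := fun w => by
      refine vec8_ext ?_ ?_ ?_ ?_ ?_ ?_ ?_ ?_ <;>
        simp only [vec2_app0, vec2_app1, vec4_app0, vec4_app1, vec4_app2, vec4_app3] }
  map_app' v := by
    simp only [hypForm, hypPlane, LinearEquiv.coe_mk, LinearEquiv.toFun_eq_coe, QuadraticMap.pi_apply,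
      weightedSumSquares_apply, Fin.sum_univ_two, Fin.sum_univ_four, Fin.sum_univ_eight,
      smul_eq_mul, vec2_app0, vec2_app1,
      vec8_app0, vec8_app1, vec8_app2, vec8_app3, vec8_app4, vec8_app5, vec8_app6, vec8_app7]
    ring

end Stmt15Aux

theorem stmt15 (h2 : (2 : F) ≠ 0) (a x y : F) (ha : a ≠ 0) (hsum : a = x ^ 2 + y ^ 2)
    (b : F) (hb : b ≠ 0) :
    IsHyperbolic F (sumCopies F 2 (pfister F ![a, b])) ∧
      (pfister F ![a, b]).Equivalent ((-1 : F) • pfister F ![a, b]) := by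
  obtain ⟨p, r, hp⟩ : ∃ p r : F, p^2 - a*r^2 = -1 := by
    by_cases hy : y = 0
    · have hx : x ≠ 0 := by
        intro h; apply ha; rw [hsum, h, hy]; ring
      refine ⟨0, x⁻¹, ?_⟩
      rw [hsum, hy]
      field_simp
      ring
    · refine ⟨x/y, 1/y, ?_⟩
      rw [hsum]
      field_simp
      try ring
  constructor
  · refine ⟨4, ?_⟩
    exact ⟨((QuadraticMap.IsometryEquiv.pi fun _ : Fin 2 => pfisterEquivAux F a b).trans
      ((flat24Aux F 1 (-a) (-b) (a*b)).trans
        (((coreRAux F a x y b ha hsum).trans (coreBAux F b h2 hb)).trans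
          (flat42Aux F).symm)))⟩
  · exact ⟨(pfisterEquivAux F a b).trans ((isoEq4Aux F a b p r hp).trans
      (isoSmulCongrAux F (-1) (pfisterEquivAux F a b).symm))⟩
end

section
/- Let F be a field of characteristic not 2 and Q an F-quaternion algebra. Then 4 × T_Q ≡ 4 × N_Q modulo 8 × W F in the Witt ring of F, where T_Q is the trace form and N_Q the norm form of Q. -/
open Quaternion QuadraticMap LinearMap TensorProduct

variable (F : Type) [Field F]

namespace Stmt19Aux

variable {F}

/-! ### Generic plumbing for weighted sums of squares -/

theorem eqw {ι : Type} [Fintype ι] {w w' : ι → F} (h : w = w') :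
    (weightedSumSquares F w).Equivalent (weightedSumSquares F w') := by
  subst h; exact ⟨QuadraticMap.IsometryEquiv.refl _⟩

noncomputable def funReindex (F : Type) [Field F] {ι ι' : Type} (e : ι ≃ ι') :
    (ι → F) ≃ₗ[F] (ι' → F) where
  toFun x := x ∘ e.symm
  invFun y := y ∘ e
  map_add' _ _ := rfl
  map_smul' _ _ := rfl
  left_inv x := by funext i; simp
  right_inv y := by funext i; simp

theorem wre {ι ι' : Type} [Fintype ι] [Fintype ι'] (e : ι ≃ ι') (w : ι' → F) :
    (weightedSumSquares F (w ∘ e)).Equivalent (weightedSumSquares F w) :=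
  ⟨{ toLinearEquiv := funReindex F e
     map_app' := fun x => by
       simp only [weightedSumSquares_apply, funReindex, LinearEquiv.coe_mk, Equiv.coe_fn_mk,
         Function.comp_apply]
       exact Fintype.sum_equiv e.symm _ _ (fun i => by simp) }⟩

noncomputable def sumElimLEquiv (F : Type) [Field F] {ι ι' : Type} :
    ((ι → F) × (ι' → F)) ≃ₗ[F] (ι ⊕ ι' → F) where
  toFun p := Sum.elim p.1 p.2
  invFun f := (f ∘ Sum.inl, f ∘ Sum.inr)
  map_add' p q := by funext i; cases i <;> rfl
  map_smul' c p := by funext i; cases i <;> rfl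
  left_inv p := rfl
  right_inv f := by funext i; cases i <;> rfl

theorem prodW {ι ι' : Type} [Fintype ι] [Fintype ι'] (w₁ : ι → F) (w₂ : ι' → F) :
    ((weightedSumSquares F w₁).prod (weightedSumSquares F w₂)).Equivalent
      (weightedSumSquares F (Sum.elim w₁ w₂)) :=
  ⟨{ toLinearEquiv := sumElimLEquiv F
     map_app' := fun p => by
       simp [weightedSumSquares_apply, QuadraticMap.prod_apply, Fintype.sum_sum_type,
         sumElimLEquiv] }⟩

noncomputable def curryLEquiv (F : Type) [Field F] {ι κ : Type} :
    (ι → κ → F) ≃ₗ[F] (ι × κ → F) where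
  toFun x p := x p.1 p.2
  invFun f i j := f (i, j)
  map_add' _ _ := rfl
  map_smul' _ _ := rfl
  left_inv _ := rfl
  right_inv _ := rfl

theorem piW {ι κ : Type} [Fintype ι] [Fintype κ] (w : ι → κ → F) :
    (QuadraticMap.pi fun i => weightedSumSquares F (w i)).Equivalent
      (weightedSumSquares F fun p : ι × κ => w p.1 p.2) :=
  ⟨{ toLinearEquiv := curryLEquiv F
     map_app' := fun x => by
       simp [weightedSumSquares_apply, QuadraticMap.pi_apply, Fintype.sum_prod_type,
         curryLEquiv] }⟩

/-! ### atomic equivalences -/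

noncomputable def dblEquiv (F : Type) [Field F] (h2 : (2:F) ≠ 0) : (Fin 2 → F) ≃ₗ[F] (Fin 2 → F) where
  toFun x := ![(x 0 + x 1)/2, (x 0 - x 1)/2]
  invFun y := ![y 0 + y 1, y 0 - y 1]
  map_add' x y := by
    funext i; fin_cases i <;> simp [Matrix.cons_val_zero, Matrix.cons_val_one] <;> ring
  map_smul' c x := by
    funext i; fin_cases i <;> simp [Matrix.cons_val_zero, Matrix.cons_val_one, smul_eq_mul] <;> ring
  left_inv x := by
    funext i; fin_cases i <;> simp <;> field_simp <;> ring
  right_inv y := by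
    funext i; fin_cases i <;> simp <;> field_simp <;> ring

theorem dbl (h2 : (2:F) ≠ 0) (c : F) :
    (weightedSumSquares F (fun _ : Fin 2 => c)).Equivalent
      (weightedSumSquares F (fun _ : Fin 2 => 2 * c)) :=
  ⟨{ toLinearEquiv := dblEquiv F h2
     map_app' := fun x => by
       simp only [weightedSumSquares_apply, Fin.sum_univ_two, dblEquiv, LinearEquiv.coe_mk,
         Equiv.coe_fn_mk, Matrix.cons_val_zero, Matrix.cons_val_one, Matrix.head_cons,
         smul_eq_mul]
       field_simp
       ring }⟩

def wv (a b : F) : ℕ → F := fun n => if n = 0 then 1 else if n = 1 then a else if n = 2 then b else -(a*b)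
def dv (a b : F) : ℕ → F := fun n => if n = 0 then a else if n = 1 then b else -(a*b)
def tv (c : F) : ℕ → F := fun n => if n = 0 then c else if n = 1 then 1 else -1
def tv' (c : F) : ℕ → F := fun n => if n = 0 then -c else c
def hv (F : Type) [Field F] : ℕ → F := fun n => if n = 0 then 1 else -1

noncomputable def terEquiv (F : Type) [Field F] (h2 : (2:F) ≠ 0) {c : F} (hc : c ≠ 0) :
    (Fin 3 → F) ≃ₗ[F] (Fin 3 → F) where
  toFun x := ![((x 1 + x 2)/c - (x 1 - x 2))/2, ((x 1 + x 2)/c + (x 1 - x 2))/2, x 0]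
  invFun y := ![y 2, (c*(y 0 + y 1) + (y 1 - y 0))/2, (c*(y 0 + y 1) - (y 1 - y 0))/2]
  map_add' x y := by
    funext i; fin_cases i <;> simp <;> field_simp <;> ring
  map_smul' r x := by
    funext i; fin_cases i <;> simp [smul_eq_mul] <;> field_simp <;> ring
  left_inv x := by
    funext i; fin_cases i <;> simp <;> field_simp <;> ring
  right_inv y := by
    funext i; fin_cases i <;> simp <;> field_simp <;> ring

theorem ter (h2 : (2:F) ≠ 0) {c : F} (hc : c ≠ 0) :
    (weightedSumSquares F (fun n : Fin 3 => tv c n.val)).Equivalent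
      (weightedSumSquares F (fun n : Fin 3 => tv' c n.val)) :=
  ⟨{ toLinearEquiv := terEquiv F h2 hc
     map_app' := fun x => by
       simp only [weightedSumSquares_apply, Fin.sum_univ_three, terEquiv, LinearEquiv.coe_mk,
         Equiv.coe_fn_mk, Matrix.cons_val_zero, Matrix.cons_val_one, Matrix.head_cons,
         Matrix.cons_val_two, Matrix.tail_cons, smul_eq_mul, tv, tv']
       norm_num
       field_simp
       ring }⟩

theorem quatEquiv (a b : F) :
    (quatTraceForm F a b).Equivalent
      (weightedSumSquares F (fun j : Fin 4 => 2 * wv a b j.val)) :=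
  ⟨{ toLinearEquiv := QuaternionAlgebra.linearEquivTuple a 0 b
     map_app' := fun x => by
       simp only [weightedSumSquares_apply, Fin.sum_univ_four,
         QuaternionAlgebra.coe_linearEquivTuple, QuaternionAlgebra.equivTuple_apply,
         Matrix.cons_val_zero, Matrix.cons_val_one, Matrix.head_cons, Matrix.cons_val_two,
         Matrix.tail_cons, Matrix.cons_val_three, smul_eq_mul, wv,
         quatTraceForm, LinearMap.BilinMap.toQuadraticMap_apply, LinearMap.compr₂_apply,
         LinearMap.mul_apply', LinearMap.smul_apply, QuaternionAlgebra.reₗ_apply,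
         QuaternionAlgebra.re_mul]
       norm_num [show ((2:Fin 4):ℕ) = 2 from rfl, show ((3:Fin 4):ℕ) = 3 from rfl,
          show (![x.re, x.imI, x.imJ, x.imK] : Fin 4 → F) 2 = x.imJ from rfl,
          show (![x.re, x.imI, x.imJ, x.imK] : Fin 4 → F) 3 = x.imK from rfl]
       ring }⟩

theorem prodHyp0 {M : Type} [AddCommGroup M] [Module F M] (φ : QuadraticForm F M) :
    (φ.prod (hypForm F 0)).Equivalent φ :=
  ⟨{ toFun := fun p => p.1
     invFun := fun x => (x, fun i : Fin 0 => i.elim0)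
     map_add' := fun _ _ => rfl
     map_smul' := fun _ _ => rfl
     left_inv := fun p => by
       obtain ⟨x, h⟩ := p
       exact Prod.ext rfl (funext fun i : Fin 0 => i.elim0)
     right_inv := fun _ => rfl
     map_app' := fun p => by
       simp [QuadraticMap.prod_apply, hypForm, QuadraticMap.pi_apply] }⟩

/-! ### index equivalences -/

def e1 : Fin 8 × Fin 2 ≃ Fin 4 × Fin 4 where
  toFun p := (⟨2 * (p.1.val / 4) + p.2.val, by have := p.1.isLt; have := p.2.isLt; omega⟩,
              ⟨p.1.val % 4, by omega⟩)
  invFun q := (⟨4 * (q.1.val / 2) + q.2.val, by have := q.1.isLt; have := q.2.isLt; omega⟩,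
               ⟨q.1.val % 2, by omega⟩)
  left_inv := by decide
  right_inv := by decide

def e2 : (Fin 4 ⊕ ((Fin 4 × Fin 3) × Fin 3)) ≃ ((Fin 8 × Fin 2) ⊕ (Fin 12 × Fin 2)) where
  toFun x :=
    match x with
    | .inl p => .inl (⟨4 * (p.val / 2), by have := p.isLt; omega⟩, ⟨p.val % 2, by omega⟩)
    | .inr q =>
      if h : q.2.val = 0 then
        .inl (⟨4 * (q.1.1.val / 2) + (q.1.2.val + 1), by have := q.1.1.isLt; have := q.1.2.isLt; omega⟩,
              ⟨q.1.1.val % 2, by omega⟩)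
      else
        .inr (⟨3 * q.1.1.val + q.1.2.val, by have := q.1.1.isLt; have := q.1.2.isLt; omega⟩,
              ⟨q.2.val - 1, by have := q.2.isLt; omega⟩)
  invFun y :=
    match y with
    | .inl p =>
      if h : p.1.val % 4 = 0 then
        .inl ⟨2 * (p.1.val / 4) + p.2.val, by have := p.1.isLt; have := p.2.isLt; omega⟩
      else
        .inr ((⟨2 * (p.1.val / 4) + p.2.val, by have := p.1.isLt; have := p.2.isLt; omega⟩,
               ⟨p.1.val % 4 - 1, by omega⟩), ⟨0, by omega⟩)
    | .inr q => .inr ((⟨q.1.val / 3, by have := q.1.isLt; omega⟩, ⟨q.1.val % 3, by omega⟩),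
                      ⟨q.2.val + 1, by have := q.2.isLt; omega⟩)
  left_inv := by decide
  right_inv := by decide

def e3 : (Fin 4 ⊕ ((Fin 4 × Fin 3) × Fin 3)) ≃ ((Fin 4 × Finset (Fin 2)) ⊕ (Fin 8 × Fin 3)) where
  toFun x :=
    match x with
    | .inl p => .inl (p, ∅)
    | .inr q =>
      if h : q.2.val = 0 then
        .inl (q.1.1, (![{0}, {1}, {0, 1}] : Fin 3 → Finset (Fin 2)) q.1.2)
      else
        .inr (⟨2 * q.1.1.val + (q.2.val - 1), by have := q.1.1.isLt; have := q.2.isLt; omega⟩, q.1.2)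
  invFun y :=
    match y with
    | .inl p =>
      if p.2 = ∅ then .inl p.1
      else .inr ((p.1, if p.2 = {0} then 0 else if p.2 = {1} then 1 else 2), 0)
    | .inr q => .inr ((⟨q.1.val / 2, by have := q.1.isLt; omega⟩, q.2),
                      ⟨q.1.val % 2 + 1, by omega⟩)
  left_inv := by decide
  right_inv := by decide

/-! ### weight bookkeeping -/

theorem hdv {a b : F} (ha : a ≠ 0) (hb : b ≠ 0) : ∀ n, dv a b n ≠ 0 := by
  intro n; unfold dv; split_ifs
  exacts [ha, hb, neg_ne_zero.mpr (mul_ne_zero ha hb)]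

theorem W1 (a b : F) :
    (fun q : Fin 4 × Fin 4 => 2 * wv a b q.2.val) ∘ e1
      = fun p : Fin 8 × Fin 2 => 2 * wv a b (p.1.val % 4) := rfl

theorem W2 (a b : F) :
    (Sum.elim (fun p : Fin 8 × Fin 2 => wv a b (p.1.val % 4))
        (fun p : Fin 12 × Fin 2 => hv F p.2.val)) ∘ e2
      = Sum.elim (fun _ : Fin 4 => (1 : F))
          (fun q : (Fin 4 × Fin 3) × Fin 3 => tv (dv a b q.1.2.val) q.2.val) := by
  funext x
  rcases x with p | ⟨⟨p, c⟩, t⟩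
  · simp [e2, wv, Nat.mul_mod_right]
  · fin_cases c <;> fin_cases t <;>
      simp [e2, wv, hv, tv, dv, Nat.mul_add_mod]

theorem W3 (a b : F) :
    Sum.elim (fun _ : Fin 4 => (1 : F))
        (fun q : (Fin 4 × Fin 3) × Fin 3 => tv' (dv a b q.1.2.val) q.2.val)
      = (Sum.elim (fun p : Fin 4 × Finset (Fin 2) => ∏ i ∈ p.2, -(![a, b] i))
          (fun p : Fin 8 × Fin 3 => (![a, b, -(a*b)] : Fin 3 → F) p.2)) ∘ e3 := by
  funext x
  rcases x with p | ⟨⟨p, c⟩, t⟩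
  · simp [e3]
  · fin_cases c <;> fin_cases t <;>
      simp [e3, tv', dv, Finset.prod_insert, Finset.prod_singleton]

end Stmt19Aux

theorem stmt19 (h2 : (2 : F) ≠ 0) (a b : F) (ha : a ≠ 0) (hb : b ≠ 0) :
    ∃ (t : ℕ) (d : Fin t → F), (∀ i, d i ≠ 0) ∧
      WittEquiv F (sumCopies F 4 (quatTraceForm F a b))
        ((sumCopies F 4 (pfister F ![a, b])).prod
          (sumCopies F 8 (weightedSumSquares F d))) := by
  classical
  open Stmt19Aux in
  refine ⟨3, ![a, b, -(a*b)], ?_, 12, 0, ?_⟩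
  · intro i; fin_cases i <;> simp [ha, hb]
  · -- left chain
    have hL : (sumCopies F 4 (quatTraceForm F a b)).Equivalent
        (weightedSumSquares F fun p : Fin 8 × Fin 2 => wv a b (p.1.val % 4)) := by
      refine (QuadraticMap.Equivalent.pi fun _ : Fin 4 => quatEquiv a b).trans ?_
      refine (piW fun _ : Fin 4 => fun j : Fin 4 => 2 * wv a b j.val).trans ?_
      refine ((wre e1 fun q : Fin 4 × Fin 4 => 2 * wv a b q.2.val).symm).trans ?_
      refine (eqw (W1 a b)).trans ?_
      refine ((piW fun k : Fin 8 => fun _ : Fin 2 => 2 * wv a b (k.val % 4)).symm).trans ?_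
      refine (QuadraticMap.Equivalent.pi fun k : Fin 8 =>
        (dbl h2 (wv a b (k.val % 4))).symm).trans ?_
      exact piW fun k : Fin 8 => fun _ : Fin 2 => wv a b (k.val % 4)
    have hH : (hypForm F 12).Equivalent
        (weightedSumSquares F fun p : Fin 12 × Fin 2 => hv F p.2.val) := by
      refine (piW fun _ : Fin 12 => (![(1:F), -1] : Fin 2 → F)).trans (eqw ?_)
      funext p
      obtain ⟨i, j⟩ := p
      fin_cases j <;> simp [hv]
    -- middle: ternary moves
    have hTer : (weightedSumSquares F
          (Sum.elim (fun _ : Fin 4 => (1 : F))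
            (fun q : (Fin 4 × Fin 3) × Fin 3 => tv (dv a b q.1.2.val) q.2.val))).Equivalent
        (weightedSumSquares F
          (Sum.elim (fun _ : Fin 4 => (1 : F))
            (fun q : (Fin 4 × Fin 3) × Fin 3 => tv' (dv a b q.1.2.val) q.2.val))) := by
      refine ((prodW (fun _ : Fin 4 => (1 : F))
        (fun q : (Fin 4 × Fin 3) × Fin 3 => tv (dv a b q.1.2.val) q.2.val)).symm).trans ?_
      refine (QuadraticMap.Equivalent.prod (QuadraticMap.Equivalent.refl _) ?_).trans
        (prodW _ _)
      refine ((piW fun q : Fin 4 × Fin 3 => fun n : Fin 3 => tv (dv a b q.2.val) n.val).symm).trans ?_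
      refine (QuadraticMap.Equivalent.pi fun q : Fin 4 × Fin 3 =>
        ter h2 (hdv ha hb q.2.val)).trans ?_
      exact piW fun q : Fin 4 × Fin 3 => fun n : Fin 3 => tv' (dv a b q.2.val) n.val
    -- right chain
    have hR : ((sumCopies F 4 (pfister F ![a, b])).prod
          (sumCopies F 8 (weightedSumSquares F ![a, b, -(a*b)]))).Equivalent
        (weightedSumSquares F
          (Sum.elim (fun p : Fin 4 × Finset (Fin 2) => ∏ i ∈ p.2, -(![a, b] i))
            (fun p : Fin 8 × Fin 3 => (![a, b, -(a*b)] : Fin 3 → F) p.2))) := by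
      refine (QuadraticMap.Equivalent.prod
        (piW fun _ : Fin 4 => fun S : Finset (Fin 2) => ∏ i ∈ S, -(![a, b] i))
        (piW fun _ : Fin 8 => (![a, b, -(a*b)] : Fin 3 → F))).trans (prodW _ _)
    -- assemble
    refine ((QuadraticMap.Equivalent.prod hL hH).trans (prodW _ _)).trans ?_
    refine ((wre e2 _).symm).trans ?_
    refine (eqw (W2 a b)).trans ?_
    refine hTer.trans ?_
    refine (eqw (W3 a b)).trans ?_
    refine (wre e3 _).trans ?_
    exact hR.symm.trans (prodHyp0 _).symm
end
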